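/- Let F be an algebraically closed field of characteristic zero whose cardinality equals 2^λ for some infinite cardinal λ. Then there exist a nonprincipal ultrafilter U on the set of prime numbers and a family (K_p)_p of fields, where each K_p is algebraically closed of characteristic p, such that F is isomorphic as a ring to the ultraproduct (∏_p K_p)/I_U. -/

import Mathlib

def ultraIdeal {ι : Type*} (R : ι → Type*) [∀ i, CommRing (R i)] (U : Ultrafilter ι) :
    Ideal (∀ i, R i) where
  carrier := {f | {i | f i = 0} ∈ U}
  zero_mem' := Filter.univ_mem' (fun i => rfl)
  add_mem' := by
    intro f g hf hg
    refine U.toFilter.mem_of_superset (Filter.inter_mem hf hg) ?_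
    rintro i ⟨hfi, hgi⟩
    simp only [Set.mem_setOf_eq] at *
    rw [Pi.add_apply, hfi, hgi, add_zero]
  smul_mem' := by
    intro c f hf
    refine U.toFilter.mem_of_superset hf ?_
    intro i hfi
    simp only [Set.mem_setOf_eq] at *
    rw [smul_eq_mul, Pi.mul_apply, hfi, mul_zero]

open Cardinal Polynomial in
theorem mem_ultraIdeal {ι : Type*} {R : ι → Type*} [∀ i, CommRing (R i)] {U : Ultrafilter ι}
    {f : ∀ i, R i} : f ∈ ultraIdeal R U ↔ {i | f i = 0} ∈ U := Iff.rfl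

theorem ultraIdeal_isMaximal {ι : Type*} (R : ι → Type*) [∀ i, Field (R i)]
    (U : Ultrafilter ι) : (ultraIdeal R U).IsMaximal := by
  rw [Ideal.isMaximal_iff]
  constructor
  · intro h
    rw [mem_ultraIdeal] at h
    have he : {i | (1 : ∀ i, R i) i = 0} = (∅ : Set ι) := by
      ext i; simp
    rw [he] at h
    exact Filter.empty_notMem (U : Filter ι) h
  · intro J x hIJ hxI hxJ
    rw [mem_ultraIdeal] at hxI
    have hS : {i | x i = 0}ᶜ ∈ U := Ultrafilter.compl_mem_iff_notMem.2 hxI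
    classical
    set y : ∀ i, R i := fun i => (x i)⁻¹ with hy
    have hmem : y * x - 1 ∈ ultraIdeal R U := by
      rw [mem_ultraIdeal]
      refine U.toFilter.mem_of_superset hS ?_
      intro i hi
      simp only [Set.mem_compl_iff, Set.mem_setOf_eq] at hi ⊢
      show y i * x i - 1 = 0
      rw [hy]
      simp [inv_mul_cancel₀ hi]
    have h1 : (1 : ∀ i, R i) = y * x - (y * x - 1) := by ring
    rw [h1]
    exact J.sub_mem (J.mul_mem_left y hxJ) (hIJ hmem)

noncomputable instance ultraField {ι : Type*} (R : ι → Type*) [∀ i, Field (R i)]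
    (U : Ultrafilter ι) : Field ((∀ i, R i) ⧸ ultraIdeal R U) :=
  haveI := ultraIdeal_isMaximal R U
  Ideal.Quotient.field _

open Polynomial in
theorem ultra_isAlgClosed {ι : Type*} (R : ι → Type*) [∀ i, Field (R i)]
    [∀ i, IsAlgClosed (R i)] (U : Ultrafilter ι) :
    IsAlgClosed ((∀ i, R i) ⧸ ultraIdeal R U) := by
  classical
  apply IsAlgClosed.of_exists_root
  intro p hpm hpi
  set n := p.natDegree with hn
  have hn0 : 0 < n := hpi.natDegree_pos
  haveI : Nonempty ι := Filter.nonempty_of_neBot (U : Filter ι)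
  haveI : Inhabited ι := Classical.inhabited_of_nonempty ‹_›
  have hsurj := Ideal.Quotient.mk_surjective (I := ultraIdeal R U)
  choose c hc using fun j => hsurj (p.coeff j)
  set Q : Polynomial (∀ i, R i) := X ^ n + ∑ j ∈ Finset.range n, C (c j) * X ^ j with hQ
  have hrdeg : (∑ j ∈ Finset.range n, C (c j) * X ^ j).degree < (n : WithBot ℕ) := by
    refine lt_of_le_of_lt (Polynomial.degree_sum_le _ _) ?_
    rw [Finset.sup_lt_iff (by exact_mod_cast WithBot.bot_lt_coe n)]
    intro j hj
    refine lt_of_le_of_lt (Polynomial.degree_C_mul_X_pow_le _ _) ?_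
    exact_mod_cast Finset.mem_range.mp hj
  have hQm : Q.Monic := Polynomial.monic_X_pow_add hrdeg
  have hQdeg : Q.degree = (n : WithBot ℕ) := by
    rw [hQ]
    rw [Polynomial.degree_add_eq_left_of_degree_lt (by rwa [Polynomial.degree_X_pow])]
    exact Polynomial.degree_X_pow n
  have hmap : Q.map (Ideal.Quotient.mk (ultraIdeal R U)) = p := by
    rw [hQ, Polynomial.map_add, Polynomial.map_pow, Polynomial.map_X, Polynomial.map_sum]
    conv_rhs => rw [hpm.as_sum]
    rw [← hn]
    congr 1
    refine Finset.sum_congr rfl fun j _ => ?_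
    rw [Polynomial.map_mul, Polynomial.map_C, Polynomial.map_pow, Polynomial.map_X, hc j]
  have hroot : ∀ i, ∃ xi : R i, (Q.map (Pi.evalRingHom R i)).eval xi = 0 := by
    intro i
    refine IsAlgClosed.exists_root _ ?_
    rw [hQm.degree_map (Pi.evalRingHom R i), hQdeg]
    exact_mod_cast hn0.ne'
  choose x hx using hroot
  refine ⟨Ideal.Quotient.mk _ x, ?_⟩
  rw [← hmap, Polynomial.eval_map, Polynomial.eval₂_hom, Ideal.Quotient.eq_zero_iff_mem,
    mem_ultraIdeal]
  refine Filter.univ_mem' fun i => ?_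
  show Q.eval x i = 0
  have h1 : (Q.map (Pi.evalRingHom R i)).eval (x i) = Q.eval x i := by
    rw [Polynomial.eval_map]
    exact Polynomial.eval₂_hom (Pi.evalRingHom R i) x
  rw [← h1, hx i]

noncomputable def KK (F : Type) (p : Nat.Primes) : Type :=
  haveI := Fact.mk p.2
  AlgebraicClosure (FractionRing (MvPolynomial F (ZMod p.1)))

noncomputable instance KK.field (F : Type) (p : Nat.Primes) : Field (KK F p) :=
  haveI := Fact.mk p.2
  inferInstanceAs (Field (AlgebraicClosure (FractionRing (MvPolynomial F (ZMod p.1)))))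

instance KK.isAlgClosed (F : Type) (p : Nat.Primes) : IsAlgClosed (KK F p) :=
  haveI := Fact.mk p.2
  inferInstanceAs (IsAlgClosed (AlgebraicClosure (FractionRing (MvPolynomial F (ZMod p.1)))))

theorem KK.charP (F : Type) (p : Nat.Primes) : CharP (KK F p) p.1 := by
  haveI := Fact.mk p.2
  let f : ZMod p.1 →+* AlgebraicClosure (FractionRing (MvPolynomial F (ZMod p.1))) :=
    (algebraMap (FractionRing (MvPolynomial F (ZMod p.1)))
      (AlgebraicClosure (FractionRing (MvPolynomial F (ZMod p.1))))).comp
      ((algebraMap (MvPolynomial F (ZMod p.1)) (FractionRing (MvPolynomial F (ZMod p.1)))).comp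
        MvPolynomial.C)
  exact charP_of_injective_ringHom f.injective p.1

open Cardinal in
theorem KK.mk_eq (F : Type) (hF : ℵ₀ ≤ #F) (p : Nat.Primes) : #(KK F p) = #F := by
  haveI := Fact.mk p.2
  have hZ : #(ZMod p.1) ≤ ℵ₀ := Cardinal.mk_le_aleph0
  have hA_le : #(MvPolynomial F (ZMod p.1)) ≤ #F := by
    refine le_trans MvPolynomial.cardinalMk_le_max ?_
    exact max_le (max_le (hZ.trans hF) le_rfl) hF
  have hA_ge : #F ≤ #(MvPolynomial F (ZMod p.1)) :=
    Cardinal.mk_le_of_injective (MvPolynomial.X_injective)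
  have hE : #(FractionRing (MvPolynomial F (ZMod p.1))) = #(MvPolynomial F (ZMod p.1)) :=
    Cardinal.mk_fractionRing _
  have h1 : #(KK F p) ≤ #F := by
    refine le_trans (Algebra.IsAlgebraic.cardinalMk_le_max
      (FractionRing (MvPolynomial F (ZMod p.1)))
      (AlgebraicClosure (FractionRing (MvPolynomial F (ZMod p.1))))) ?_
    rw [hE]
    exact max_le hA_le hF
  have h2 : #F ≤ #(KK F p) := by
    refine le_trans (hA_ge.trans hE.ge) ?_
    exact Cardinal.mk_le_of_injective
      (algebraMap (FractionRing (MvPolynomial F (ZMod p.1)))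
        (AlgebraicClosure (FractionRing (MvPolynomial F (ZMod p.1))))).injective
  exact le_antisymm h1 h2

open Cardinal in
theorem stmt3 (F : Type) [Field F] [IsAlgClosed F] [CharZero F]
    (lam : Cardinal) (hlam : Cardinal.aleph0 ≤ lam) (hF : Cardinal.mk F = 2 ^ lam) :
    ∃ (U : Ultrafilter Nat.Primes) (K : Nat.Primes → Type) (instK : ∀ p, Field (K p)),
      (∀ s : Set Nat.Primes, s.Finite → s ∉ U) ∧
      (letI := instK;
        (∀ p : Nat.Primes, IsAlgClosed (K p) ∧ CharP (K p) p.1) ∧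
        Nonempty (F ≃+* ((∀ p, K p) ⧸ ultraIdeal K U))) := by
  classical
  haveI : Infinite Nat.Primes := Nat.infinite_setOf_prime.to_subtype
  have hF' : ℵ₀ ≤ #F := by
    rw [hF]
    exact hlam.trans (Cardinal.cantor lam).le
  refine ⟨Filter.hyperfilter Nat.Primes, KK F, fun p => KK.field F p,
    fun s hs => Filter.notMem_hyperfilter_of_finite hs,
    fun p => ⟨KK.isAlgClosed F p, KK.charP F p⟩, ?_⟩
  set U : Ultrafilter Nat.Primes := Filter.hyperfilter Nat.Primes with hU
  set Q := (∀ p, KK F p) ⧸ ultraIdeal (KK F) U with hQdef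
  haveI : IsAlgClosed Q := ultra_isAlgClosed (KK F) U
  haveI : CharP Q 0 := by
    constructor
    intro a
    constructor
    · intro h
      by_contra ha
      have ha0 : a ≠ 0 := by
        intro h0
        subst h0; exact ha (dvd_refl 0)
      have hcast : (a : Q) = Ideal.Quotient.mk _ ((a : ∀ p, KK F p)) :=
        (map_natCast (Ideal.Quotient.mk (ultraIdeal (KK F) U)) a).symm
      rw [hcast, Ideal.Quotient.eq_zero_iff_mem, mem_ultraIdeal] at h
      have hsub : {p : Nat.Primes | (a : ∀ p, KK F p) p = 0} ⊆ {p : Nat.Primes | p.1 ∣ a} := by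
        intro p hp
        simp only [Set.mem_setOf_eq] at hp ⊢
        haveI := KK.charP F p
        exact (CharP.cast_eq_zero_iff (KK F p) p.1 a).mp hp
      have hmem : {p : Nat.Primes | p.1 ∣ a} ∈ U := Filter.mem_of_superset h hsub
      have hfin : {p : Nat.Primes | p.1 ∣ a}.Finite := by
        have : {p : Nat.Primes | p.1 ∣ a} = Subtype.val ⁻¹' {m : ℕ | m ∣ a} := rfl
        rw [this]
        refine Set.Finite.preimage Subtype.val_injective.injOn ?_
        refine (Set.finite_Iic a).subset ?_
        intro m hm
        exact Nat.le_of_dvd (Nat.pos_of_ne_zero ha0) hm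
      exact Filter.notMem_hyperfilter_of_finite hfin hmem
    · intro h
      rw [zero_dvd_iff.mp h]
      exact Nat.cast_zero
  haveI : CharZero Q := CharP.charP_to_charZero Q
  have hQle : #Q ≤ #F := by
    calc #Q ≤ #(∀ p, KK F p) :=
            Cardinal.mk_le_of_surjective Ideal.Quotient.mk_surjective
      _ = Cardinal.prod (fun p => #(KK F p)) := Cardinal.mk_pi _
      _ = Cardinal.prod (fun _ : Nat.Primes => #F) := by
            congr 1
            funext p
            exact KK.mk_eq F hF' p
      _ = #F ^ #Nat.Primes := Cardinal.prod_const' _ _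
      _ = #F ^ (ℵ₀ : Cardinal) := by rw [Cardinal.mk_eq_aleph0 Nat.Primes]
      _ = (2 ^ lam) ^ (ℵ₀ : Cardinal) := by rw [hF]
      _ = 2 ^ (lam * ℵ₀) := Cardinal.power_mul.symm
      _ = 2 ^ lam := by rw [Cardinal.mul_aleph0_eq hlam]
      _ = #F := hF.symm
  have hFle : #F ≤ #Q := by
    have hemb : ∀ p, Nonempty (F ↪ KK F p) := fun p =>
      Cardinal.le_def F (KK F p) |>.mp (le_of_eq (KK.mk_eq F hF' p).symm)
    let e : ∀ p, F ↪ KK F p := fun p => (hemb p).some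
    refine Cardinal.mk_le_of_injective
      (f := fun a : F => Ideal.Quotient.mk (ultraIdeal (KK F) U) (fun p => e p a)) ?_
    intro a b hab
    rw [Ideal.Quotient.eq, mem_ultraIdeal] at hab
    obtain ⟨p, hp⟩ := Ultrafilter.nonempty_of_mem hab
    simp only [Set.mem_setOf_eq, Pi.sub_apply] at hp
    exact (e p).injective (sub_eq_zero.mp hp)
  have hℵ : ℵ₀ < #F := by
    rw [hF]
    exact lt_of_le_of_lt hlam (Cardinal.cantor lam)
  exact IsAlgClosed.ringEquiv_of_equiv_of_charZero hℵ (Cardinal.eq.1 (le_antisymm hFle hQle))
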